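/- arXiv:2112.02005 — 2 statements merged into one kernel-verified Lean document; each statement's English description precedes it below -/
import Mathlib

section
/- Mixed parameterization identities (Corollary 6, algebraic core): Suppose S is a stability matrix for the output-feedback realization R with controller K, assume z•1 − A is invertible, and set G := C * (z•1 − A)⁻¹ * B + D. Then the blocks (Syx, Syy, Φux, Φuy) of S satisfy: Syx − G * Φux = C * (z•1 − A)⁻¹, Syy − G * Φuy = 1, Syx * (z•1 − A) = Syy * C, and Φux * (z•1 − A) = Φuy * C. -/
open Matrix

noncomputable section

set_option synthInstance.maxHeartbeats 1000000
set_option maxHeartbeats 1000000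

/-- A 3×3 block matrix. -/
def b3 {α n₁ n₂ n₃ m₁ m₂ m₃ : Type*}
    (M₁₁ : Matrix n₁ m₁ α) (M₁₂ : Matrix n₁ m₂ α) (M₁₃ : Matrix n₁ m₃ α)
    (M₂₁ : Matrix n₂ m₁ α) (M₂₂ : Matrix n₂ m₂ α) (M₂₃ : Matrix n₂ m₃ α)
    (M₃₁ : Matrix n₃ m₁ α) (M₃₂ : Matrix n₃ m₂ α) (M₃₃ : Matrix n₃ m₃ α) :
    Matrix (n₁ ⊕ n₂ ⊕ n₃) (m₁ ⊕ m₂ ⊕ m₃) α :=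
  Matrix.fromBlocks M₁₁ (Matrix.fromCols M₁₂ M₁₃)
    (Matrix.fromRows M₂₁ M₃₁) (Matrix.fromBlocks M₂₂ M₂₃ M₃₂ M₃₃)

/-- A real constant matrix regarded as a matrix of rational transfer functions. -/
def mR {n m : Type*} (M : Matrix n m ℝ) : Matrix n m (RatFunc ℝ) :=
  M.map (algebraMap ℝ (RatFunc ℝ))

/-- The transfer-function variable `z`. -/
def zz : RatFunc ℝ := RatFunc.X


set_option linter.unusedSectionVars false

section Aux
variable {R : Type*} [CommRing R] {n₁ n₂ n₃ m₁ m₂ m₃ k₁ k₂ k₃ : Type*}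
  [Fintype m₁] [Fintype m₂] [Fintype m₃]

lemma b3_mul
    (A₁₁ : Matrix n₁ m₁ R) (A₁₂ : Matrix n₁ m₂ R) (A₁₃ : Matrix n₁ m₃ R)
    (A₂₁ : Matrix n₂ m₁ R) (A₂₂ : Matrix n₂ m₂ R) (A₂₃ : Matrix n₂ m₃ R)
    (A₃₁ : Matrix n₃ m₁ R) (A₃₂ : Matrix n₃ m₂ R) (A₃₃ : Matrix n₃ m₃ R)
    (B₁₁ : Matrix m₁ k₁ R) (B₁₂ : Matrix m₁ k₂ R) (B₁₃ : Matrix m₁ k₃ R)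
    (B₂₁ : Matrix m₂ k₁ R) (B₂₂ : Matrix m₂ k₂ R) (B₂₃ : Matrix m₂ k₃ R)
    (B₃₁ : Matrix m₃ k₁ R) (B₃₂ : Matrix m₃ k₂ R) (B₃₃ : Matrix m₃ k₃ R) :
    b3 A₁₁ A₁₂ A₁₃ A₂₁ A₂₂ A₂₃ A₃₁ A₃₂ A₃₃ * b3 B₁₁ B₁₂ B₁₃ B₂₁ B₂₂ B₂₃ B₃₁ B₃₂ B₃₃ =
    b3 (A₁₁*B₁₁+A₁₂*B₂₁+A₁₃*B₃₁) (A₁₁*B₁₂+A₁₂*B₂₂+A₁₃*B₃₂) (A₁₁*B₁₃+A₁₂*B₂₃+A₁₃*B₃₃)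
       (A₂₁*B₁₁+A₂₂*B₂₁+A₂₃*B₃₁) (A₂₁*B₁₂+A₂₂*B₂₂+A₂₃*B₃₂) (A₂₁*B₁₃+A₂₂*B₂₃+A₂₃*B₃₃)
       (A₃₁*B₁₁+A₃₂*B₂₁+A₃₃*B₃₁) (A₃₁*B₁₂+A₃₂*B₂₂+A₃₃*B₃₂) (A₃₁*B₁₃+A₃₂*B₂₃+A₃₃*B₃₃) := by
  ext (i|i|i) (j|j|j) <;>
    simp [b3, mul_apply, fromBlocks, fromCols, fromRows_apply_inl, fromRows_apply_inr, Fintype.sum_sum_type,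
      Finset.sum_add_distrib, add_assoc]

lemma b3_inj
    {M₁₁ N₁₁ : Matrix n₁ m₁ R} {M₁₂ N₁₂ : Matrix n₁ m₂ R} {M₁₃ N₁₃ : Matrix n₁ m₃ R}
    {M₂₁ N₂₁ : Matrix n₂ m₁ R} {M₂₂ N₂₂ : Matrix n₂ m₂ R} {M₂₃ N₂₃ : Matrix n₂ m₃ R}
    {M₃₁ N₃₁ : Matrix n₃ m₁ R} {M₃₂ N₃₂ : Matrix n₃ m₂ R} {M₃₃ N₃₃ : Matrix n₃ m₃ R}
    (h : b3 M₁₁ M₁₂ M₁₃ M₂₁ M₂₂ M₂₃ M₃₁ M₃₂ M₃₃ = b3 N₁₁ N₁₂ N₁₃ N₂₁ N₂₂ N₂₃ N₃₁ N₃₂ N₃₃) :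
    M₁₁ = N₁₁ ∧ M₁₂ = N₁₂ ∧ M₁₃ = N₁₃ ∧ M₂₁ = N₂₁ ∧ M₂₂ = N₂₂ ∧ M₂₃ = N₂₃ ∧
    M₃₁ = N₃₁ ∧ M₃₂ = N₃₂ ∧ M₃₃ = N₃₃ := by
  refine ⟨?_,?_,?_,?_,?_,?_,?_,?_,?_⟩ <;> ext i j
  · simpa [b3, fromBlocks, fromCols, fromRows] using congrFun (congrFun h (Sum.inl i)) (Sum.inl j)
  · simpa [b3, fromBlocks, fromCols, fromRows] using congrFun (congrFun h (Sum.inl i)) (Sum.inr (Sum.inl j))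
  · simpa [b3, fromBlocks, fromCols, fromRows] using congrFun (congrFun h (Sum.inl i)) (Sum.inr (Sum.inr j))
  · simpa [b3, fromBlocks, fromCols, fromRows_apply_inl, fromRows_apply_inr] using congrFun (congrFun h (Sum.inr (Sum.inl i))) (Sum.inl j)
  · simpa [b3, fromBlocks, fromCols, fromRows] using congrFun (congrFun h (Sum.inr (Sum.inl i))) (Sum.inr (Sum.inl j))
  · simpa [b3, fromBlocks, fromCols, fromRows] using congrFun (congrFun h (Sum.inr (Sum.inl i))) (Sum.inr (Sum.inr j))
  · simpa [b3, fromBlocks, fromCols, fromRows_apply_inl, fromRows_apply_inr] using congrFun (congrFun h (Sum.inr (Sum.inr i))) (Sum.inl j)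
  · simpa [b3, fromBlocks, fromCols, fromRows] using congrFun (congrFun h (Sum.inr (Sum.inr i))) (Sum.inr (Sum.inl j))
  · simpa [b3, fromBlocks, fromCols, fromRows] using congrFun (congrFun h (Sum.inr (Sum.inr i))) (Sum.inr (Sum.inr j))

lemma b3_one [DecidableEq n₁] [DecidableEq n₂] [DecidableEq n₃] :
    b3 (1 : Matrix n₁ n₁ R) 0 0 0 (1 : Matrix n₂ n₂ R) 0 0 0 (1 : Matrix n₃ n₃ R) = 1 := by
  ext (i|i|i) (j|j|j) <;> simp [b3, fromBlocks, fromCols, fromRows_apply_inl, fromRows_apply_inr, one_apply]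

end Aux

/-- **Mixed parameterization identities** (Corollary 6, algebraic core).
If `S` is a stability matrix for the output-feedback realization with controller `K`,
`z•1 - A` is invertible and `G := C (z•1 - A)⁻¹ B + D`, then the blocks
`(Syx, Syy, Φux, Φuy)` of `S` satisfy the mixed-parameterization identities. -/
theorem mixed_parameterization {n m p : Type*} [Fintype n] [Fintype m] [Fintype p]
    [DecidableEq n] [DecidableEq m] [DecidableEq p]
    (A : Matrix n n ℝ) (B : Matrix n m ℝ) (C : Matrix p n ℝ) (D : Matrix p m ℝ)
    (K : Matrix m p (RatFunc ℝ))
    (Φxx : Matrix n n (RatFunc ℝ)) (Sxu : Matrix n m (RatFunc ℝ)) (Φxy : Matrix n p (RatFunc ℝ))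
    (Φux : Matrix m n (RatFunc ℝ)) (Suu : Matrix m m (RatFunc ℝ)) (Φuy : Matrix m p (RatFunc ℝ))
    (Syx : Matrix p n (RatFunc ℝ)) (Syu : Matrix p m (RatFunc ℝ)) (Syy : Matrix p p (RatFunc ℝ))
    (hL : (1 - b3 (mR A + (1 - zz) • (1 : Matrix n n (RatFunc ℝ))) (mR B)
            (0 : Matrix n p (RatFunc ℝ))
            (0 : Matrix m n (RatFunc ℝ)) (0 : Matrix m m (RatFunc ℝ)) K
            (mR C) (mR D) (0 : Matrix p p (RatFunc ℝ))) *
          b3 Φxx Sxu Φxy Φux Suu Φuy Syx Syu Syy = 1)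
    (hR : b3 Φxx Sxu Φxy Φux Suu Φuy Syx Syu Syy *
          (1 - b3 (mR A + (1 - zz) • (1 : Matrix n n (RatFunc ℝ))) (mR B)
            (0 : Matrix n p (RatFunc ℝ))
            (0 : Matrix m n (RatFunc ℝ)) (0 : Matrix m m (RatFunc ℝ)) K
            (mR C) (mR D) (0 : Matrix p p (RatFunc ℝ))) = 1)
    (hA : IsUnit (zz • (1 : Matrix n n (RatFunc ℝ)) - mR A)) :
    let Z := zz • (1 : Matrix n n (RatFunc ℝ)) - mR A
    let G := mR C * Z⁻¹ * mR B + mR D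
    Syx - G * Φux = mR C * Z⁻¹ ∧
    Syy - G * Φuy = 1 ∧
    Syx * Z = Syy * mR C ∧
    Φux * Z = Φuy * mR C := by
  intro Z G
  have hZdef : Z = zz • (1 : Matrix n n (RatFunc ℝ)) - mR A := rfl
  have hGdef : G = mR C * Z⁻¹ * mR B + mR D := rfl
  have hdet : IsUnit (Z.det) := (Matrix.isUnit_iff_isUnit_det _).mp (hZdef ▸ hA)
  have hZi : Z⁻¹ * Z = 1 := Matrix.nonsing_inv_mul _ hdet
  -- rewrite 1 - R in b3 form
  have hRrw : (1 : Matrix (n ⊕ m ⊕ p) (n ⊕ m ⊕ p) (RatFunc ℝ)) -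
      b3 (mR A + (1 - zz) • (1 : Matrix n n (RatFunc ℝ))) (mR B) (0 : Matrix n p (RatFunc ℝ))
        (0 : Matrix m n (RatFunc ℝ)) (0 : Matrix m m (RatFunc ℝ)) K
        (mR C) (mR D) (0 : Matrix p p (RatFunc ℝ)) =
      b3 Z (-(mR B)) 0 0 1 (-K) (-(mR C)) (-(mR D)) 1 := by
    rw [hZdef]
    ext (i|i|i) (j|j|j) <;>
      simp [b3, fromBlocks, fromCols, fromRows_apply_inl, fromRows_apply_inr, one_apply, Matrix.sub_apply, Matrix.add_apply,
        Matrix.smul_apply, smul_eq_mul] <;> split_ifs <;> ring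
  rw [hRrw, b3_mul, ← b3_one] at hL hR
  obtain ⟨e11, -, e13, -, -, -, e31, -, e33⟩ := b3_inj hL
  obtain ⟨-, -, -, f21, -, -, f31, -, -⟩ := b3_inj hR
  simp only [Matrix.zero_mul, Matrix.mul_zero, add_zero, zero_add, Matrix.neg_mul,
    Matrix.mul_neg, Matrix.one_mul, Matrix.mul_one, ← sub_eq_add_neg] at e11 e13 e31 e33 f21 f31
  -- e11 : Z * Φxx - mR B * Φux = 1
  -- e13 : Z * Φxy - mR B * Φuy = 0
  -- e31 : -(mR C * Φxx) - mR D * Φux + Syx = 0 (shape to check)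
  have hΦxx : Φxx = Z⁻¹ + Z⁻¹ * (mR B * Φux) := by
    have h2 : Z⁻¹ * (Z * Φxx - mR B * Φux) = Z⁻¹ := by rw [e11, mul_one]
    rwa [Matrix.mul_sub, ← Matrix.mul_assoc, hZi, Matrix.one_mul, sub_eq_iff_eq_add] at h2
  have hΦxy : Φxy = Z⁻¹ * (mR B * Φuy) := by
    have h2 : Z⁻¹ * (Z * Φxy - mR B * Φuy) = 0 := by rw [e13, Matrix.mul_zero]
    rwa [Matrix.mul_sub, ← Matrix.mul_assoc, hZi, Matrix.one_mul, sub_eq_zero] at h2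
  have hSyx : Syx = mR C * Φxx + mR D * Φux := by linear_combination (norm := abel) e31
  have hSyy : Syy = 1 + mR C * Φxy + mR D * Φuy := by linear_combination (norm := abel) e33
  refine ⟨?_, ?_, ?_, ?_⟩
  · rw [hSyx, hΦxx, hGdef]
    simp only [Matrix.mul_add, Matrix.add_mul, Matrix.mul_assoc]
    abel
  · rw [hSyy, hΦxy, hGdef]
    simp only [Matrix.mul_add, Matrix.add_mul, Matrix.mul_assoc]
    abel
  · rw [← sub_eq_zero]; linear_combination (norm := abel) f31
  · rw [← sub_eq_zero]; linear_combination (norm := abel) f21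

end
end

section
/- Internal stability of the simpler SLS deployment realization (Section V-B, Theorem 1 of [tseng2020deployment]): Let K := RatFunc ℝ with z := RatFunc.X, let A : n×n and B : n×m be real matrices over K with z•1 − A invertible, and let Φx : n×n, Φu : m×n satisfy (z•1 − A) * Φx − B * Φu = 1. Set P := (z•1 − A)⁻¹ * B and define R_r := [[A + (1−z)•1, B, 0],[0, 0, z•Φu],[z⁻¹•(z•1 − A), −z⁻¹•B, 0]] and S_r := [[Φx, P, z•(P * Φu)],[Φu, 1, z•Φu],[z⁻¹•1, 0, 1]] (blocks indexed by x, u, δ with δ of dimension n). Then (1 − R_r) * S_r = 1 and S_r * (1 − R_r) = 1. -/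
open Matrix

noncomputable section

set_option synthInstance.maxHeartbeats 1000000
set_option maxHeartbeats 1000000

section Aux

variable {α n₁ n₂ n₃ m₁ m₂ m₃ k₁ k₂ k₃ : Type*}

lemma myFromRows_sub [Sub α] (A : Matrix n₁ m₁ α) (B : Matrix n₂ m₁ α)
    (C : Matrix n₁ m₁ α) (D : Matrix n₂ m₁ α) :
    fromRows A B - fromRows C D = fromRows (A - C) (B - D) := by
  ext (i | i) j <;> simp

lemma myFromColumns_sub [Sub α] (A : Matrix n₁ m₁ α) (B : Matrix n₁ m₂ α)
    (C : Matrix n₁ m₁ α) (D : Matrix n₁ m₂ α) :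
    fromCols A B - fromCols C D = fromCols (A - C) (B - D) := by
  ext i (j | j) <;> simp

lemma myFromBlocks_sub [Sub α] (A : Matrix n₁ m₁ α) (B : Matrix n₁ m₂ α)
    (C : Matrix n₂ m₁ α) (D : Matrix n₂ m₂ α)
    (A' : Matrix n₁ m₁ α) (B' : Matrix n₁ m₂ α)
    (C' : Matrix n₂ m₁ α) (D' : Matrix n₂ m₂ α) :
    fromBlocks A B C D - fromBlocks A' B' C' D' =
      fromBlocks (A - A') (B - B') (C - C') (D - D') := by
  ext (i | i) (j | j) <;> simp

lemma myFromRows_add [Add α] (A : Matrix n₁ m₁ α) (B : Matrix n₂ m₁ α)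
    (C : Matrix n₁ m₁ α) (D : Matrix n₂ m₁ α) :
    fromRows A B + fromRows C D = fromRows (A + C) (B + D) := by
  ext (i | i) j <;> simp

lemma myFromColumns_add [Add α] (A : Matrix n₁ m₁ α) (B : Matrix n₁ m₂ α)
    (C : Matrix n₁ m₁ α) (D : Matrix n₁ m₂ α) :
    fromCols A B + fromCols C D = fromCols (A + C) (B + D) := by
  ext i (j | j) <;> simp

lemma b3_sub [Sub α]
    (A₁₁ : Matrix n₁ m₁ α) (A₁₂ : Matrix n₁ m₂ α) (A₁₃ : Matrix n₁ m₃ α)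
    (A₂₁ : Matrix n₂ m₁ α) (A₂₂ : Matrix n₂ m₂ α) (A₂₃ : Matrix n₂ m₃ α)
    (A₃₁ : Matrix n₃ m₁ α) (A₃₂ : Matrix n₃ m₂ α) (A₃₃ : Matrix n₃ m₃ α)
    (B₁₁ : Matrix n₁ m₁ α) (B₁₂ : Matrix n₁ m₂ α) (B₁₃ : Matrix n₁ m₃ α)
    (B₂₁ : Matrix n₂ m₁ α) (B₂₂ : Matrix n₂ m₂ α) (B₂₃ : Matrix n₂ m₃ α)
    (B₃₁ : Matrix n₃ m₁ α) (B₃₂ : Matrix n₃ m₂ α) (B₃₃ : Matrix n₃ m₃ α) :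
    b3 A₁₁ A₁₂ A₁₃ A₂₁ A₂₂ A₂₃ A₃₁ A₃₂ A₃₃ - b3 B₁₁ B₁₂ B₁₃ B₂₁ B₂₂ B₂₃ B₃₁ B₃₂ B₃₃ =
      b3 (A₁₁ - B₁₁) (A₁₂ - B₁₂) (A₁₃ - B₁₃) (A₂₁ - B₂₁) (A₂₂ - B₂₂) (A₂₃ - B₂₃)
        (A₃₁ - B₃₁) (A₃₂ - B₃₂) (A₃₃ - B₃₃) := by
  simp [b3, myFromBlocks_sub, myFromRows_sub, myFromColumns_sub]

lemma one_b3 [Zero α] [One α] [DecidableEq n₁] [DecidableEq n₂] [DecidableEq n₃] :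
    (1 : Matrix (n₁ ⊕ n₂ ⊕ n₃) (n₁ ⊕ n₂ ⊕ n₃) α) =
      b3 1 0 0 0 1 0 0 0 1 := by
  ext (i | i | i) (j | j | j) <;>
    simp [b3, Matrix.one_apply, fromBlocks, fromCols, fromRows] <;> rfl

lemma b3_congr
    {A₁₁ B₁₁ : Matrix n₁ m₁ α} {A₁₂ B₁₂ : Matrix n₁ m₂ α} {A₁₃ B₁₃ : Matrix n₁ m₃ α}
    {A₂₁ B₂₁ : Matrix n₂ m₁ α} {A₂₂ B₂₂ : Matrix n₂ m₂ α} {A₂₃ B₂₃ : Matrix n₂ m₃ α}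
    {A₃₁ B₃₁ : Matrix n₃ m₁ α} {A₃₂ B₃₂ : Matrix n₃ m₂ α} {A₃₃ B₃₃ : Matrix n₃ m₃ α}
    (h₁₁ : A₁₁ = B₁₁) (h₁₂ : A₁₂ = B₁₂) (h₁₃ : A₁₃ = B₁₃)
    (h₂₁ : A₂₁ = B₂₁) (h₂₂ : A₂₂ = B₂₂) (h₂₃ : A₂₃ = B₂₃)
    (h₃₁ : A₃₁ = B₃₁) (h₃₂ : A₃₂ = B₃₂) (h₃₃ : A₃₃ = B₃₃) :
    b3 A₁₁ A₁₂ A₁₃ A₂₁ A₂₂ A₂₃ A₃₁ A₃₂ A₃₃ = b3 B₁₁ B₁₂ B₁₃ B₂₁ B₂₂ B₂₃ B₃₁ B₃₂ B₃₃ := by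
  rw [h₁₁, h₁₂, h₁₃, h₂₁, h₂₂, h₂₃, h₃₁, h₃₂, h₃₃]

lemma b3_mul_b3 [Semiring α] [Fintype m₁] [Fintype m₂] [Fintype m₃]
    (A₁₁ : Matrix n₁ m₁ α) (A₁₂ : Matrix n₁ m₂ α) (A₁₃ : Matrix n₁ m₃ α)
    (A₂₁ : Matrix n₂ m₁ α) (A₂₂ : Matrix n₂ m₂ α) (A₂₃ : Matrix n₂ m₃ α)
    (A₃₁ : Matrix n₃ m₁ α) (A₃₂ : Matrix n₃ m₂ α) (A₃₃ : Matrix n₃ m₃ α)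
    (B₁₁ : Matrix m₁ k₁ α) (B₁₂ : Matrix m₁ k₂ α) (B₁₃ : Matrix m₁ k₃ α)
    (B₂₁ : Matrix m₂ k₁ α) (B₂₂ : Matrix m₂ k₂ α) (B₂₃ : Matrix m₂ k₃ α)
    (B₃₁ : Matrix m₃ k₁ α) (B₃₂ : Matrix m₃ k₂ α) (B₃₃ : Matrix m₃ k₃ α) :
    b3 A₁₁ A₁₂ A₁₃ A₂₁ A₂₂ A₂₃ A₃₁ A₃₂ A₃₃ * b3 B₁₁ B₁₂ B₁₃ B₂₁ B₂₂ B₂₃ B₃₁ B₃₂ B₃₃ =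
      b3 (A₁₁ * B₁₁ + (A₁₂ * B₂₁ + A₁₃ * B₃₁))
        (A₁₁ * B₁₂ + (A₁₂ * B₂₂ + A₁₃ * B₃₂))
        (A₁₁ * B₁₃ + (A₁₂ * B₂₃ + A₁₃ * B₃₃))
        (A₂₁ * B₁₁ + (A₂₂ * B₂₁ + A₂₃ * B₃₁))
        (A₂₁ * B₁₂ + (A₂₂ * B₂₂ + A₂₃ * B₃₂))
        (A₂₁ * B₁₃ + (A₂₂ * B₂₃ + A₂₃ * B₃₃))
        (A₃₁ * B₁₁ + (A₃₂ * B₂₁ + A₃₃ * B₃₁))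
        (A₃₁ * B₁₂ + (A₃₂ * B₂₂ + A₃₃ * B₃₂))
        (A₃₁ * B₁₃ + (A₃₂ * B₂₃ + A₃₃ * B₃₃)) := by
  simp only [b3, fromBlocks_multiply, fromCols_mul_fromRows, fromCols_mul_fromBlocks,
    fromBlocks_mul_fromRows, fromRows_mul_fromCols, mul_fromCols, fromRows_mul,
    fromBlocks_add, myFromRows_add, myFromColumns_add, fromCols_fromRows_eq_fromBlocks]

end Aux

set_option maxHeartbeats 4000000 in
/-- **Internal stability of the simpler SLS deployment realization** (Section V-B,
Theorem 1 of [tseng2020deployment]).  For `(Φx, Φu)` satisfying the SLP constraint and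
`z•1 - A` invertible with `P := (z•1 - A)⁻¹ B`, the deployment realization `R_r` has
internal stability matrix `S_r`. -/
theorem deployment_sf_sls_realization {n m : Type*} [Fintype n] [Fintype m]
    [DecidableEq n] [DecidableEq m]
    (A : Matrix n n ℝ) (B : Matrix n m ℝ)
    (hA : IsUnit (zz • (1 : Matrix n n (RatFunc ℝ)) - mR A))
    (Φx : Matrix n n (RatFunc ℝ)) (Φu : Matrix m n (RatFunc ℝ))
    (hSLP : (zz • (1 : Matrix n n (RatFunc ℝ)) - mR A) * Φx - mR B * Φu = 1) :
    let P := (zz • (1 : Matrix n n (RatFunc ℝ)) - mR A)⁻¹ * mR B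
    let Rr := b3 (mR A + (1 - zz) • (1 : Matrix n n (RatFunc ℝ))) (mR B)
        (0 : Matrix n n (RatFunc ℝ))
        (0 : Matrix m n (RatFunc ℝ)) (0 : Matrix m m (RatFunc ℝ)) (zz • Φu)
        (zz⁻¹ • (zz • (1 : Matrix n n (RatFunc ℝ)) - mR A)) (-(zz⁻¹ • mR B))
        (0 : Matrix n n (RatFunc ℝ))
    let Sr := b3 Φx P (zz • (P * Φu))
        Φu (1 : Matrix m m (RatFunc ℝ)) (zz • Φu)
        (zz⁻¹ • (1 : Matrix n n (RatFunc ℝ))) (0 : Matrix n m (RatFunc ℝ))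
        (1 : Matrix n n (RatFunc ℝ))
    (1 - Rr) * Sr = 1 ∧ Sr * (1 - Rr) = 1 := by
  intro P Rr Sr
  set Z : Matrix n n (RatFunc ℝ) := zz • (1 : Matrix n n (RatFunc ℝ)) - mR A with hZ
  have hz : zz ≠ 0 := RatFunc.X_ne_zero
  have hzinv : zz⁻¹ * zz = 1 := inv_mul_cancel₀ hz
  have hzinv' : zz * zz⁻¹ = 1 := mul_inv_cancel₀ hz
  have hdet : IsUnit Z.det := (Matrix.isUnit_iff_isUnit_det Z).mp hA
  have hZinv : Z * Z⁻¹ = 1 := Matrix.mul_nonsing_inv Z hdet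
  have hZinv' : Z⁻¹ * Z = 1 := Matrix.nonsing_inv_mul Z hdet
  have hZP : Z * P = mR B := by
    show Z * (Z⁻¹ * mR B) = mR B
    rw [← Matrix.mul_assoc, hZinv, Matrix.one_mul]
  have hx : Z * Φx = 1 + mR B * Φu := by
    rw [← hSLP]; abel
  have hPhix : Φx - P * Φu = Z⁻¹ := by
    have h1 : Z * (Φx - P * Φu) = 1 := by
      rw [Matrix.mul_sub, ← Matrix.mul_assoc, hZP, hSLP]
    calc Φx - P * Φu = (Z⁻¹ * Z) * (Φx - P * Φu) := by rw [hZinv', Matrix.one_mul]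
      _ = Z⁻¹ * (Z * (Φx - P * Φu)) := by rw [Matrix.mul_assoc]
      _ = Z⁻¹ := by rw [h1, Matrix.mul_one]
  have e11 : (1 : Matrix n n (RatFunc ℝ)) - (mR A + (1 - zz) • (1 : Matrix n n (RatFunc ℝ)))
      = Z := by
    rw [sub_smul, one_smul, hZ]; abel
  have hRr : Rr = b3 (mR A + (1 - zz) • (1 : Matrix n n (RatFunc ℝ))) (mR B) 0
      0 0 (zz • Φu) (zz⁻¹ • Z) (-(zz⁻¹ • mR B)) 0 := rfl
  have hSr : Sr = b3 Φx P (zz • (P * Φu)) Φu 1 (zz • Φu)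
      (zz⁻¹ • (1 : Matrix n n (RatFunc ℝ))) 0 1 := rfl
  have h1Rr : 1 - Rr = b3 Z (-(mR B)) 0 0 1 (-(zz • Φu))
      (-(zz⁻¹ • Z)) (zz⁻¹ • mR B) 1 := by
    rw [one_b3, hRr, b3_sub, e11]
    refine b3_congr rfl ?_ ?_ ?_ ?_ ?_ ?_ ?_ ?_
    all_goals simp
  have hP2 : (Φx - P * Φu) * mR B = P := by rw [hPhix]
  constructor
  · rw [h1Rr, hSr, b3_mul_b3, one_b3]
    refine b3_congr ?_ ?_ ?_ ?_ ?_ ?_ ?_ ?_ ?_ <;>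
      simp only [Matrix.mul_smul, Matrix.smul_mul, smul_smul, smul_neg, hzinv, hzinv',
        one_smul, Matrix.neg_mul, Matrix.mul_neg, Matrix.zero_mul, Matrix.mul_zero,
        Matrix.one_mul, Matrix.mul_one, add_zero, zero_add, ← Matrix.mul_assoc, hZP, hx,
        smul_add, smul_zero, neg_zero]
    all_goals try abel
    all_goals try rfl
  · rw [h1Rr, hSr, b3_mul_b3, one_b3]
    refine b3_congr ?_ ?_ ?_ ?_ ?_ ?_ ?_ ?_ ?_ <;>
      simp only [Matrix.mul_smul, Matrix.smul_mul, smul_smul, smul_neg, hzinv, hzinv',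
        one_smul, Matrix.neg_mul, Matrix.mul_neg, Matrix.zero_mul, Matrix.mul_zero,
        Matrix.one_mul, Matrix.mul_one, add_zero, zero_add, ← Matrix.mul_assoc, hZP,
        smul_add, smul_zero, neg_zero]
    · rw [← sub_eq_add_neg, ← Matrix.sub_mul, hPhix, hZinv']
    · nth_rewrite 1 [← hP2]
      rw [Matrix.sub_mul]
      abel
    all_goals try abel
    all_goals rfl

end
end
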